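/- Let f: ℝ → ℂ be a continuous 2π-periodic function that is real-analytic except at finitely many points, near each of which f(θ) = a(θ) + |θ - θ_s|^{1/2} b(θ) with a, b real-analytic. Then the Fourier coefficients c_k = (1/2π)∫₀^{2π} f(θ)e^{-ikθ}dθ satisfy c_k = O(|k|^{-3/2}) as |k| → ∞. -/

import Mathlib

open Real Metric intervalIntegral



/-- Second difference bound via second derivative. -/

theorem sd_bound {g g' g'' : ℝ → ℂ} {θ h M : ℝ} (h0 : 0 ≤ h)
    (hg : ∀ y ∈ Set.Icc (θ - h) (θ + h), HasDerivAt g (g' y) y)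
    (hg' : ∀ y ∈ Set.Icc (θ - h) (θ + h), HasDerivAt g' (g'' y) y)
    (hM : ∀ y ∈ Set.Icc (θ - h) (θ + h), ‖g'' y‖ ≤ M) :
    ‖g (θ + h) + g (θ - h) - 2 * g θ‖ ≤ M * h ^ 2 := by
  have hIcc : Set.Icc (θ - h) (θ + h) = Set.Icc (θ - h) (θ + h) := rfl
  have hmem : ∀ t ∈ Set.Icc (0:ℝ) h, θ + t ∈ Set.Icc (θ - h) (θ + h) := by
    intro t ht; constructor <;> [linarith [ht.1]; linarith [ht.2]]
  have hmem' : ∀ t ∈ Set.Icc (0:ℝ) h, θ - t ∈ Set.Icc (θ - h) (θ + h) := by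
    intro t ht; constructor <;> [linarith [ht.2]; linarith [ht.1]]
  -- Lipschitz bound for g'
  have hlip : ∀ x ∈ Set.Icc (θ - h) (θ + h), ∀ y ∈ Set.Icc (θ - h) (θ + h),
      ‖g' x - g' y‖ ≤ M * ‖x - y‖ := by
    intro x hx y hy
    exact Convex.norm_image_sub_le_of_norm_hasDerivWithin_le
      (fun z hz => (hg' z hz).hasDerivWithinAt) hM (convex_Icc _ _) hy hx
  -- p t = g (θ + t) + g (θ - t)
  set p : ℝ → ℂ := fun t => g (θ + t) + g (θ - t) with hp
  set q : ℝ → ℂ := fun t => g' (θ + t) - g' (θ - t) with hq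
  have hpderiv : ∀ t ∈ Set.uIcc (0:ℝ) h, HasDerivAt p (q t) t := by
    intro t ht
    rw [Set.uIcc_of_le h0] at ht
    have h1 : HasDerivAt (fun t => g (θ + t)) (g' (θ + t)) t := by
      have hd : HasDerivAt (fun t : ℝ => θ + t) 1 t := by simpa using (hasDerivAt_id t).const_add θ
      have := HasDerivAt.scomp (𝕜 := ℝ) t (by simpa using hg _ (hmem t ht)) hd
      simpa [Function.comp_def] using this
    have h2 : HasDerivAt (fun t => g (θ - t)) (-g' (θ - t)) t := by
      have hd : HasDerivAt (fun t : ℝ => θ - t) (-1) t := by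
        simpa using ((hasDerivAt_id t).const_sub θ)
      have := HasDerivAt.scomp (𝕜 := ℝ) t (by simpa using hg _ (hmem' t ht)) hd
      simpa [Function.comp_def] using this
    convert h1.add h2 using 1
    · rfl
    · rfl
    simp only [hq, sub_eq_add_neg]
  have hqcont : ContinuousOn q (Set.uIcc (0:ℝ) h) := by
    intro t ht
    have := (hpderiv t ht)
    rw [Set.uIcc_of_le h0] at ht
    have c1 : ContinuousAt (fun t => g' (θ + t)) t :=
      ((hg' _ (hmem t ht)).continuousAt).comp (by fun_prop)
    have c2 : ContinuousAt (fun t => g' (θ - t)) t :=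
      ((hg' _ (hmem' t ht)).continuousAt).comp (by fun_prop)
    exact (c1.sub c2).continuousWithinAt
  have hqint : IntervalIntegrable q MeasureTheory.volume 0 h := hqcont.intervalIntegrable
  have hftc : ∫ t in (0:ℝ)..h, q t = p h - p 0 :=
    intervalIntegral.integral_eq_sub_of_hasDerivAt hpderiv hqint
  have hqbound : ∀ t ∈ Set.Icc (0:ℝ) h, ‖q t‖ ≤ M * (2 * t) := by
    intro t ht
    have := hlip _ (hmem t ht) _ (hmem' t ht)
    have he : ‖(θ + t) - (θ - t)‖ = 2 * t := by
      rw [Real.norm_eq_abs]; rw [abs_of_nonneg (by linarith [ht.1])]; ring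
    calc ‖q t‖ ≤ M * ‖(θ + t) - (θ - t)‖ := this
    _ = M * (2 * t) := by rw [he]
  have key : ‖p h - p 0‖ ≤ M * h ^ 2 := by
    rw [← hftc]
    have := intervalIntegral.norm_integral_le_integral_norm (f := q)
      (μ := MeasureTheory.volume) h0
    refine this.trans ?_
    have : ∫ t in (0:ℝ)..h, ‖q t‖ ≤ ∫ t in (0:ℝ)..h, M * (2 * t) := by
      apply intervalIntegral.integral_mono_on h0
      · exact (hqcont.norm).intervalIntegrable
      · exact (by fun_prop : Continuous fun t : ℝ => M * (2*t)).intervalIntegrable _ _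
      · exact hqbound
    refine this.trans ?_
    rw [intervalIntegral.integral_const_mul]
    rw [intervalIntegral.integral_const_mul]
    simp [integral_id]
    ring_nf
    nlinarith [sq_nonneg h]
  have : p h - p 0 = g (θ + h) + g (θ - h) - 2 * g θ := by
    simp [hp]; ring
  rwa [this] at key



lemma sqrt2_le : Real.sqrt 2 ≤ 1.5 := by
  nlinarith [Real.sq_sqrt (by norm_num : (0:ℝ) ≤ 2), Real.sqrt_nonneg 2]

lemma num1 : (2:ℝ) ^ ((3:ℝ)/2) ≤ 3 := by
  rw [show (3:ℝ)/2 = 1 + 1/2 by norm_num, Real.rpow_add two_pos, Real.rpow_one,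
    ← Real.sqrt_eq_rpow]
  nlinarith [Real.sqrt_nonneg 2, sqrt2_le]

lemma num2 : (2:ℝ) ^ ((1:ℝ)/2) ≤ 1.5 := by
  rw [← Real.sqrt_eq_rpow]; exact sqrt2_le

lemma rpow_anti {a b c : ℝ} (ha : 0 < a) (hab : a ≤ b) (hc : c ≤ 0) : b ^ c ≤ a ^ c :=
  Real.rpow_le_rpow_of_nonpos ha hab hc

lemma one_le_rpow_neg {x c : ℝ} (hx0 : 0 < x) (hx1 : x ≤ 1) (hc : c ≤ 0) : 1 ≤ x ^ c := by
  calc (1:ℝ) = x ^ (0:ℝ) := (Real.rpow_zero x).symm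
  _ ≤ x ^ c := Real.rpow_le_rpow_of_exponent_ge hx0 hx1 hc



theorem unif_min {α : Type*} [DecidableEq α] (T : Finset α) (p : α → ℝ → Prop)
    (hmono : ∀ t ∈ T, ∀ ε ε' : ℝ, 0 < ε' → ε' ≤ ε → p t ε → p t ε')
    (hp : ∀ t ∈ T, ∃ ε > 0, p t ε) :
    ∃ δ > 0, δ ≤ 1 ∧ ∀ t ∈ T, p t δ := by
  classical
  induction T using Finset.induction_on with
  | empty => exact ⟨1, one_pos, le_refl 1, fun t ht => absurd ht (Finset.notMem_empty t)⟩
  | @insert s T hs ih =>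
    obtain ⟨δ, hδ, hδ1, hT⟩ := ih (fun t ht => hmono t (Finset.mem_insert_of_mem ht))
      (fun t ht => hp t (Finset.mem_insert_of_mem ht))
    obtain ⟨ε, hε, hpε⟩ := hp s (Finset.mem_insert_self s T)
    refine ⟨min δ ε, lt_min hδ hε, (min_le_left _ _).trans hδ1, ?_⟩
    intro t ht
    rcases Finset.mem_insert.1 ht with rfl | ht'
    · exact hmono t ht _ _ (lt_min hδ hε) (min_le_right _ _) hpε
    · exact hmono t ht _ _ (lt_min hδ hε) (min_le_left _ _) (hT t ht')

theorem unif_max {α : Type*} [DecidableEq α] (T : Finset α) (q : α → ℝ → Prop)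
    (hmono : ∀ t ∈ T, ∀ M M' : ℝ, M ≤ M' → q t M → q t M')
    (hq : ∀ t ∈ T, ∃ M, q t M) :
    ∃ M : ℝ, 0 ≤ M ∧ ∀ t ∈ T, q t M := by
  classical
  induction T using Finset.induction_on with
  | empty => exact ⟨0, le_refl 0, fun t ht => absurd ht (Finset.notMem_empty t)⟩
  | @insert s T hs ih =>
    obtain ⟨M, hM0, hT⟩ := ih (fun t ht => hmono t (Finset.mem_insert_of_mem ht))
      (fun t ht => hq t (Finset.mem_insert_of_mem ht))
    obtain ⟨M', hM'⟩ := hq s (Finset.mem_insert_self s T)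
    refine ⟨max M M', le_trans hM0 (le_max_left _ _), ?_⟩
    intro t ht
    rcases Finset.mem_insert.1 ht with rfl | ht'
    · exact hmono t ht _ _ (le_max_right _ _) hM'
    · exact hmono t ht _ _ (le_max_left _ _) (hT t ht')

/-- monotonicity of interval integral of a nonneg function under interval inclusion -/

theorem integral_sub_interval_le {G : ℝ → ℝ} {a b c d : ℝ} (hca : c ≤ a) (hab : a ≤ b)
    (hbd : b ≤ d) (hG : ∀ x, 0 ≤ G x) (hint : ∀ u v : ℝ, IntervalIntegrable G MeasureTheory.volume u v) :
    ∫ x in a..b, G x ≤ ∫ x in c..d, G x := by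
  have h1 : ∫ x in c..d, G x = (∫ x in c..a, G x) + (∫ x in a..b, G x) + ∫ x in b..d, G x := by
    rw [intervalIntegral.integral_add_adjacent_intervals (hint c a) (hint a b)]
    rw [intervalIntegral.integral_add_adjacent_intervals (hint c b) (hint b d)]
  have h2 : 0 ≤ ∫ x in c..a, G x := intervalIntegral.integral_nonneg hca (fun u _ => hG u)
  have h3 : 0 ≤ ∫ x in b..d, G x := intervalIntegral.integral_nonneg hbd (fun u _ => hG u)
  linarith

/-- The key singular-kernel integral bound. -/

theorem kernel_integral_bound {t h : ℝ} (hh : 0 < h) (hh1 : h ≤ 1) (ht : t ∈ Set.Icc (-π) (3*π)) :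
    ∫ θ in (0:ℝ)..(2*π), (max |θ - t| h) ^ (-(3:ℝ)/2) ≤ 6 * h ^ (-(1:ℝ)/2) := by
  have hπ := Real.pi_gt_three
  set G : ℝ → ℝ := fun u => (max |u| h) ^ (-(3:ℝ)/2) with hG
  have hGpos : ∀ u, 0 < max |u| h := fun u => lt_of_lt_of_le hh (le_max_right _ _)
  have hGcont : Continuous G := by
    apply Continuous.rpow_const
    · exact continuous_abs.max continuous_const
    · intro x; exact Or.inl (ne_of_gt (hGpos x))
  have hGnonneg : ∀ u, 0 ≤ G u := fun u => Real.rpow_nonneg (le_of_lt (hGpos u)) _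
  have hGint : ∀ u v : ℝ, IntervalIntegrable G MeasureTheory.volume u v :=
    fun u v => hGcont.intervalIntegrable u v
  have step1 : ∫ θ in (0:ℝ)..(2*π), (max |θ - t| h) ^ (-(3:ℝ)/2) = ∫ u in (0-t)..(2*π-t), G u := by
    rw [← intervalIntegral.integral_comp_sub_right G t]
  rw [step1]
  have step2 : ∫ u in (0-t)..(2*π-t), G u ≤ ∫ u in (-(4*π))..(4*π), G u := by
    apply integral_sub_interval_le _ _ _ hGnonneg hGint
    · obtain ⟨h1, h2⟩ := ht; linarith
    · linarith
    · obtain ⟨h1, h2⟩ := ht; linarith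
  refine step2.trans ?_
  have split : ∫ u in (-(4*π))..(4*π), G u
      = (∫ u in (-(4*π))..(-h), G u) + (∫ u in (-h)..h, G u) + ∫ u in h..(4*π), G u := by
    rw [intervalIntegral.integral_add_adjacent_intervals (hGint _ _) (hGint _ _),
        intervalIntegral.integral_add_adjacent_intervals (hGint _ _) (hGint _ _)]
  have hmid : ∫ u in (-h)..h, G u = 2 * h ^ (-(1:ℝ)/2) := by
    have : ∫ u in (-h)..h, G u = ∫ u in (-h)..h, h ^ (-(3:ℝ)/2) := by
      apply intervalIntegral.integral_congr
      intro u hu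
      rw [Set.uIcc_of_le (by linarith)] at hu
      have : |u| ≤ h := abs_le.2 ⟨hu.1, hu.2⟩
      simp [hG, max_eq_right this]
    rw [this, intervalIntegral.integral_const, smul_eq_mul]
    have : h ^ (-(3:ℝ)/2) = h ^ (-(1:ℝ)/2) * h⁻¹ := by
      rw [← Real.rpow_neg_one h, ← Real.rpow_add hh]; norm_num
    rw [this]
    field_simp
    ring
  have hright : ∫ u in h..(4*π), G u ≤ 2 * h ^ (-(1:ℝ)/2) := by
    have hcong : ∫ u in h..(4*π), G u = ∫ u in h..(4*π), u ^ (-(3:ℝ)/2) := by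
      apply intervalIntegral.integral_congr
      intro u hu
      rw [Set.uIcc_of_le (by linarith)] at hu
      have h1 : h ≤ u := hu.1
      have : max |u| h = u := by
        rw [abs_of_nonneg (by linarith)]; exact max_eq_left h1
      simp [hG, this]
    rw [hcong]
    rw [integral_rpow (Or.inr ⟨by norm_num, by
      rw [Set.uIcc_of_le (by linarith)]
      exact fun hc => absurd hc.1 (by push_neg; linarith)⟩)]
    have e1 : (-(3:ℝ)/2) + 1 = -(1/2) := by norm_num
    rw [e1]
    have hp1 : (0:ℝ) < (4*π) ^ (-(1:ℝ)/2) := Real.rpow_pos_of_pos (by linarith) _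
    have : ((4*π) ^ (-(1:ℝ)/2) - h ^ (-(1:ℝ)/2)) / (-(1/2)) = 2 * (h ^ (-(1:ℝ)/2) - (4*π) ^ (-(1:ℝ)/2)) := by
      field_simp; ring
    rw [show (-(1:ℝ)/2) = -(1/2) by norm_num] at *
    rw [this]
    nlinarith [Real.rpow_nonneg (le_of_lt hh) (-(1:ℝ)/2)]
  have hleft : ∫ u in (-(4*π))..(-h), G u ≤ 2 * h ^ (-(1:ℝ)/2) := by
    have : ∫ u in (-(4*π))..(-h), G u = ∫ u in h..(4*π), G (-u) := by
      rw [intervalIntegral.integral_comp_neg G]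
    have hev : ∀ u, G (-u) = G u := by intro u; simp [hG]
    rw [this]
    simp_rw [hev]
    exact hright
  rw [split]
  linarith



set_option maxHeartbeats 2000000 in

theorem phib_sd_right {b b' b'' : ℝ → ℂ} {t δ M h x : ℝ}
    (hδ : 0 < δ) (hδ1 : δ ≤ 1) (hM0 : 0 ≤ M)
    (hb : ∀ y ∈ ball t (4*δ), HasDerivAt b (b' y) y)
    (hb' : ∀ y ∈ ball t (4*δ), HasDerivAt b' (b'' y) y)
    (hMb : ∀ y ∈ closedBall t (2*δ), ‖b y‖ ≤ M)
    (hMb' : ∀ y ∈ closedBall t (2*δ), ‖b' y‖ ≤ M)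
    (hMb'' : ∀ y ∈ closedBall t (2*δ), ‖b'' y‖ ≤ M)
    (hh : 0 < h) (hx1 : 2*h < x) (hx2 : x < δ) (hhδ : h ≤ δ/2) :
    ‖((|t + x + h - t| ^ ((1:ℝ)/2) : ℝ) : ℂ) * b (t + x + h)
      + ((|t + x - h - t| ^ ((1:ℝ)/2) : ℝ) : ℂ) * b (t + x - h)
      - 2 * (((|t + x - t| ^ ((1:ℝ)/2) : ℝ) : ℂ) * b (t + x))‖
      ≤ 5 * M * x ^ (-(3:ℝ)/2) * h ^ 2 := by
  set θ := t + x with hθ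
  set g : ℝ → ℂ := fun y => ((|y - t| ^ ((1:ℝ)/2) : ℝ) : ℂ) * b y with hg
  set g1 : ℝ → ℂ := fun y =>
    (((1/2) * (y - t) ^ (-(1:ℝ)/2) : ℝ) : ℂ) * b y + (((y - t) ^ ((1:ℝ)/2) : ℝ) : ℂ) * b' y
    with hg1
  set g2 : ℝ → ℂ := fun y =>
    (((-(1:ℝ)/4) * (y - t) ^ (-(3:ℝ)/2) : ℝ) : ℂ) * b y
    + (((y - t) ^ (-(1:ℝ)/2) : ℝ) : ℂ) * b' y
    + (((y - t) ^ ((1:ℝ)/2) : ℝ) : ℂ) * b'' y with hg2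
  have hIcc : ∀ y ∈ Set.Icc (θ - h) (θ + h), (x/2 ≤ y - t ∧ y - t ≤ x + h) := by
    intro y hy
    constructor <;> [skip; skip] <;> simp only [hθ] at hy ⊢ <;>
      [linarith [hy.1]; linarith [hy.2]]
  have hball : ∀ y ∈ Set.Icc (θ - h) (θ + h), y ∈ ball t (4*δ) ∧ y ∈ closedBall t (2*δ) := by
    intro y hy
    obtain ⟨h1, h2⟩ := hIcc y hy
    have hpos : 0 < y - t := lt_of_lt_of_le (by linarith) h1
    constructor
    · rw [mem_ball, Real.dist_eq, abs_of_pos hpos]; linarith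
    · rw [mem_closedBall, Real.dist_eq, abs_of_pos hpos]; linarith
  -- derivative chain
  have hgd : ∀ y ∈ Set.Icc (θ - h) (θ + h), HasDerivAt g (g1 y) y := by
    intro y hy
    obtain ⟨h1, h2⟩ := hIcc y hy
    have hpos : 0 < y - t := lt_of_lt_of_le (by linarith) h1
    have hP : HasDerivAt (fun z : ℝ => (z - t) ^ ((1:ℝ)/2))
        ((1/2) * (y - t) ^ (-(1:ℝ)/2)) y := by
      have hbase := Real.hasDerivAt_rpow_const (x := y - t) (p := (1:ℝ)/2)
        (Or.inl (ne_of_gt hpos))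
      have hin : HasDerivAt (fun z : ℝ => z - t) 1 y := (hasDerivAt_id y).sub_const t
      have h2 := hbase.comp y hin
      have h3 : HasDerivAt (fun z : ℝ => (z - t) ^ ((1:ℝ)/2))
          ((1:ℝ)/2 * (y - t) ^ ((1:ℝ)/2 - 1) * 1) y := h2
      convert h3 using 1
      norm_num
    have hPabs : HasDerivAt (fun z : ℝ => |z - t| ^ ((1:ℝ)/2))
        ((1/2) * (y - t) ^ (-(1:ℝ)/2)) y := by
      apply hP.congr_of_eventuallyEq
      have hev : ∀ᶠ z in nhds y, z ∈ Set.Ioi t := Ioi_mem_nhds (by linarith)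
      filter_upwards [hev] with z hz
      rw [abs_of_pos (by simpa using hz : 0 < z - t)]
    have hmul := (HasDerivAt.ofReal_comp hPabs).mul (hb y (hball y hy).1)
    rw [abs_of_pos hpos] at hmul
    simp only [hg, hg1]
    convert hmul using 1
    · rfl
    · rfl
  have hgd' : ∀ y ∈ Set.Icc (θ - h) (θ + h), HasDerivAt g1 (g2 y) y := by
    intro y hy
    obtain ⟨h1, h2⟩ := hIcc y hy
    have hpos : 0 < y - t := lt_of_lt_of_le (by linarith) h1
    have hin : HasDerivAt (fun z : ℝ => z - t) 1 y := (hasDerivAt_id y).sub_const t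
    have hP : HasDerivAt (fun z : ℝ => (z - t) ^ ((1:ℝ)/2))
        ((1/2) * (y - t) ^ (-(1:ℝ)/2)) y := by
      have hbase := Real.hasDerivAt_rpow_const (x := y - t) (p := (1:ℝ)/2)
        (Or.inl (ne_of_gt hpos))
      have h2 := hbase.comp y hin
      have h3 : HasDerivAt (fun z : ℝ => (z - t) ^ ((1:ℝ)/2))
          ((1:ℝ)/2 * (y - t) ^ ((1:ℝ)/2 - 1) * 1) y := h2
      convert h3 using 1
      norm_num
    have hQ : HasDerivAt (fun z : ℝ => (1/2) * (z - t) ^ (-(1:ℝ)/2))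
        ((-(1:ℝ)/4) * (y - t) ^ (-(3:ℝ)/2)) y := by
      have hbase := Real.hasDerivAt_rpow_const (x := y - t) (p := -(1:ℝ)/2)
        (Or.inl (ne_of_gt hpos))
      have h2 := hbase.comp y hin
      have h3 : HasDerivAt (fun z : ℝ => (z - t) ^ (-(1:ℝ)/2))
          (-(1:ℝ)/2 * (y - t) ^ (-(1:ℝ)/2 - 1) * 1) y := h2
      have h4 := h3.const_mul ((1:ℝ)/2)
      convert h4 using 1
      · rfl
      · rfl
      rw [show (-(1:ℝ)/2 - 1) = (-(3:ℝ)/2) by norm_num]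
      ring
    have t1 := (HasDerivAt.ofReal_comp hQ).mul (hb y (hball y hy).1)
    have t2 := (HasDerivAt.ofReal_comp hP).mul (hb' y (hball y hy).1)
    have := t1.add t2
    simp only [hg1, hg2]
    convert this using 1
    · rfl
    · rfl
    push_cast
    ring
  have hM2 : ∀ y ∈ Set.Icc (θ - h) (θ + h), ‖g2 y‖ ≤ 5 * M * x ^ (-(3:ℝ)/2) := by
    intro y hy
    obtain ⟨h1, h2⟩ := hIcc y hy
    have hpos : 0 < y - t := lt_of_lt_of_le (by linarith) h1
    have hxpos : 0 < x := by linarith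
    have hx2pos : 0 < x/2 := by linarith
    have hyc := (hball y hy).2
    have hxneg : (0:ℝ) ≤ x ^ (-(3:ℝ)/2) := Real.rpow_nonneg (le_of_lt hxpos) _
    -- bounds on the three rpow factors
    have e1 : (y - t) ^ (-(3:ℝ)/2) ≤ 3 * x ^ (-(3:ℝ)/2) := by
      have hb1 : (y - t) ^ (-(3:ℝ)/2) ≤ (x/2) ^ (-(3:ℝ)/2) :=
        rpow_anti hx2pos h1 (by norm_num)
      have hb2 : (x/2) ^ (-(3:ℝ)/2) = x ^ (-(3:ℝ)/2) * 2 ^ ((3:ℝ)/2) := by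
        rw [Real.div_rpow (le_of_lt hxpos) (by norm_num)]
        rw [show ((3:ℝ)/2) = -(-(3:ℝ)/2) by norm_num, Real.rpow_neg (by norm_num : (0:ℝ) ≤ 2)]
        field_simp
      calc (y - t) ^ (-(3:ℝ)/2) ≤ x ^ (-(3:ℝ)/2) * 2 ^ ((3:ℝ)/2) := by rw [← hb2]; exact hb1
      _ ≤ 3 * x ^ (-(3:ℝ)/2) := by nlinarith [num1]
    have e2 : (y - t) ^ (-(1:ℝ)/2) ≤ 1.5 * x ^ (-(3:ℝ)/2) := by
      have hb1 : (y - t) ^ (-(1:ℝ)/2) ≤ (x/2) ^ (-(1:ℝ)/2) :=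
        rpow_anti hx2pos h1 (by norm_num)
      have hb2 : (x/2) ^ (-(1:ℝ)/2) = x ^ (-(1:ℝ)/2) * 2 ^ ((1:ℝ)/2) := by
        rw [Real.div_rpow (le_of_lt hxpos) (by norm_num)]
        rw [show ((1:ℝ)/2) = -(-(1:ℝ)/2) by norm_num, Real.rpow_neg (by norm_num : (0:ℝ) ≤ 2)]
        field_simp
      have hb3 : x ^ (-(1:ℝ)/2) ≤ x ^ (-(3:ℝ)/2) :=
        Real.rpow_le_rpow_of_exponent_ge hxpos (by linarith) (by norm_num)
      have hxhalf : (0:ℝ) ≤ x ^ (-(1:ℝ)/2) := Real.rpow_nonneg (le_of_lt hxpos) _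
      calc (y - t) ^ (-(1:ℝ)/2) ≤ x ^ (-(1:ℝ)/2) * 2 ^ ((1:ℝ)/2) := by rw [← hb2]; exact hb1
      _ ≤ 1.5 * x ^ (-(1:ℝ)/2) := by nlinarith [num2]
      _ ≤ 1.5 * x ^ (-(3:ℝ)/2) := by nlinarith
    have e3 : (y - t) ^ ((1:ℝ)/2) ≤ (3:ℝ)/2 * x ^ (-(3:ℝ)/2) := by
      have hyt2 : y - t ≤ (3:ℝ)/2 := by
        have : x + h ≤ 3*δ/2 := by linarith
        have : y - t ≤ 3*δ/2 := le_trans h2 this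
        linarith [hδ1]
      have hb1 : (y - t) ^ ((1:ℝ)/2) ≤ ((3:ℝ)/2) ^ ((1:ℝ)/2) :=
        Real.rpow_le_rpow (le_of_lt hpos) hyt2 (by norm_num)
      have hb2 : ((3:ℝ)/2) ^ ((1:ℝ)/2) ≤ (3:ℝ)/2 :=
        calc ((3:ℝ)/2) ^ ((1:ℝ)/2) ≤ ((3:ℝ)/2) ^ ((1:ℝ)) :=
          Real.rpow_le_rpow_of_exponent_le (by norm_num) (by norm_num)
        _ = (3:ℝ)/2 := Real.rpow_one _
      have hone : (1:ℝ) ≤ x ^ (-(3:ℝ)/2) := one_le_rpow_neg hxpos (by linarith) (by norm_num)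
      calc (y - t) ^ ((1:ℝ)/2) ≤ (3:ℝ)/2 := le_trans hb1 hb2
      _ = (3:ℝ)/2 * 1 := by ring
      _ ≤ (3:ℝ)/2 * x ^ (-(3:ℝ)/2) := mul_le_mul_of_nonneg_left hone (by norm_num)
    have n1 : ‖(((-(1:ℝ)/4) * (y - t) ^ (-(3:ℝ)/2) : ℝ) : ℂ) * b y‖
        ≤ (1/4) * (y - t) ^ (-(3:ℝ)/2) * M := by
      rw [norm_mul, Complex.norm_real, Real.norm_eq_abs, abs_mul]
      have : |(-(1:ℝ)/4)| = 1/4 := by norm_num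
      rw [this, abs_of_nonneg (Real.rpow_nonneg (le_of_lt hpos) _)]
      have hnn : (0:ℝ) ≤ 1/4 * (y - t) ^ (-(3:ℝ)/2) :=
        mul_nonneg (by norm_num) (Real.rpow_nonneg (le_of_lt hpos) _)
      exact mul_le_mul_of_nonneg_left (hMb y hyc) hnn
    have n2 : ‖(((y - t) ^ (-(1:ℝ)/2) : ℝ) : ℂ) * b' y‖ ≤ (y - t) ^ (-(1:ℝ)/2) * M := by
      rw [norm_mul, Complex.norm_real, Real.norm_eq_abs,
        abs_of_nonneg (Real.rpow_nonneg (le_of_lt hpos) _)]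
      exact mul_le_mul_of_nonneg_left (hMb' y hyc) (Real.rpow_nonneg (le_of_lt hpos) _)
    have n3 : ‖(((y - t) ^ ((1:ℝ)/2) : ℝ) : ℂ) * b'' y‖ ≤ (y - t) ^ ((1:ℝ)/2) * M := by
      rw [norm_mul, Complex.norm_real, Real.norm_eq_abs,
        abs_of_nonneg (Real.rpow_nonneg (le_of_lt hpos) _)]
      exact mul_le_mul_of_nonneg_left (hMb'' y hyc) (Real.rpow_nonneg (le_of_lt hpos) _)
    have htot : ‖g2 y‖ ≤ (1/4) * (y - t) ^ (-(3:ℝ)/2) * M + (y - t) ^ (-(1:ℝ)/2) * M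
        + (y - t) ^ ((1:ℝ)/2) * M := by
      have tri : ‖g2 y‖ ≤ ‖(((-(1:ℝ)/4) * (y - t) ^ (-(3:ℝ)/2) : ℝ) : ℂ) * b y‖
          + ‖(((y - t) ^ (-(1:ℝ)/2) : ℝ) : ℂ) * b' y‖
          + ‖(((y - t) ^ ((1:ℝ)/2) : ℝ) : ℂ) * b'' y‖ := by
        refine le_trans (norm_add_le _ _) ?_
        have := norm_add_le ((((-(1:ℝ)/4) * (y - t) ^ (-(3:ℝ)/2) : ℝ) : ℂ) * b y)
          ((((y - t) ^ (-(1:ℝ)/2) : ℝ) : ℂ) * b' y)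
        linarith
      linarith
    have p1 : (1/4) * (y - t) ^ (-(3:ℝ)/2) * M ≤ (1/4) * (3 * x ^ (-(3:ℝ)/2)) * M := by
      have := mul_le_mul_of_nonneg_right e1 hM0
      linarith
    have p2 : (y - t) ^ (-(1:ℝ)/2) * M ≤ 1.5 * x ^ (-(3:ℝ)/2) * M :=
      mul_le_mul_of_nonneg_right e2 hM0
    have p3 : (y - t) ^ ((1:ℝ)/2) * M ≤ (3:ℝ)/2 * x ^ (-(3:ℝ)/2) * M :=
      mul_le_mul_of_nonneg_right e3 hM0
    have : (1/4) * (3 * x ^ (-(3:ℝ)/2)) * M + 1.5 * x ^ (-(3:ℝ)/2) * M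
        + (3:ℝ)/2 * x ^ (-(3:ℝ)/2) * M ≤ 5 * M * x ^ (-(3:ℝ)/2) := by
      have hnn : 0 ≤ M * x ^ (-(3:ℝ)/2) := mul_nonneg hM0 hxneg
      nlinarith
    linarith
  have := sd_bound (le_of_lt hh) hgd hgd' hM2
  calc ‖g (θ + h) + g (θ - h) - 2 * g θ‖ ≤ (5 * M * x ^ (-(3:ℝ)/2)) * h ^ 2 := this
  _ = 5 * M * x ^ (-(3:ℝ)/2) * h ^ 2 := by ring



set_option maxHeartbeats 2000000 in

theorem key_near {f a a' a'' b b' b'' : ℝ → ℂ} {t δ M : ℝ}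
    (hδ : 0 < δ) (hδ1 : δ ≤ 1) (hM0 : 0 ≤ M)
    (ha : ∀ y ∈ ball t (4*δ), HasDerivAt a (a' y) y)
    (ha' : ∀ y ∈ ball t (4*δ), HasDerivAt a' (a'' y) y)
    (hb : ∀ y ∈ ball t (4*δ), HasDerivAt b (b' y) y)
    (hb' : ∀ y ∈ ball t (4*δ), HasDerivAt b' (b'' y) y)
    (hMa'' : ∀ y ∈ closedBall t (2*δ), ‖a'' y‖ ≤ M)
    (hMb : ∀ y ∈ closedBall t (2*δ), ‖b y‖ ≤ M)
    (hMb' : ∀ y ∈ closedBall t (2*δ), ‖b' y‖ ≤ M)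
    (hMb'' : ∀ y ∈ closedBall t (2*δ), ‖b'' y‖ ≤ M)
    (hrepr : ∀ y ∈ ball t (4*δ), f y = a y + ((|y - t| ^ ((1:ℝ)/2) : ℝ) : ℂ) * b y)
    {h θ : ℝ} (hh : 0 < h) (hhδ : h ≤ δ/2) (hxδ : |θ - t| < δ) :
    ‖f (θ + h) + f (θ - h) - 2 * f θ‖
      ≤ M * h ^ 2 + 24 * M * (max |θ - t| h) ^ (-(3:ℝ)/2) * h ^ 2 := by
  have habs := abs_le.1 (le_of_lt hxδ)
  have hIccball : ∀ y ∈ Set.Icc (θ - h) (θ + h), y ∈ ball t (4*δ) ∧ y ∈ closedBall t (2*δ) := by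
    intro y hy
    have h1 : |y - t| ≤ |θ - t| + h := by
      rw [abs_le]
      constructor <;> [linarith [hy.1, habs.1, neg_abs_le (θ - t)];
        linarith [hy.2, le_abs_self (θ - t)]]
    constructor
    · rw [mem_ball, Real.dist_eq]; linarith
    · rw [mem_closedBall, Real.dist_eq]; linarith
  have hpts : θ ∈ ball t (4*δ) ∧ θ + h ∈ ball t (4*δ) ∧ θ - h ∈ ball t (4*δ) :=
    ⟨(hIccball θ ⟨by linarith, by linarith⟩).1,
      (hIccball (θ+h) ⟨by linarith, le_refl _⟩).1,
      (hIccball (θ-h) ⟨le_refl _, by linarith⟩).1⟩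
  set g : ℝ → ℂ := fun y => ((|y - t| ^ ((1:ℝ)/2) : ℝ) : ℂ) * b y with hg
  have hdecomp : f (θ + h) + f (θ - h) - 2 * f θ
      = (a (θ + h) + a (θ - h) - 2 * a θ) + (g (θ + h) + g (θ - h) - 2 * g θ) := by
    rw [hrepr _ hpts.2.1, hrepr _ hpts.2.2, hrepr _ hpts.1]
    simp only [hg]
    ring
  have hA : ‖a (θ + h) + a (θ - h) - 2 * a θ‖ ≤ M * h ^ 2 :=
    sd_bound (le_of_lt hh)
      (fun y hy => ha y (hIccball y hy).1) (fun y hy => ha' y (hIccball y hy).1)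
      (fun y hy => hMa'' y (hIccball y hy).2)
  have hmaxpos : 0 < max |θ - t| h := lt_of_lt_of_le hh (le_max_right _ _)
  have hmaxnn : (0:ℝ) ≤ (max |θ - t| h) ^ (-(3:ℝ)/2) :=
    Real.rpow_nonneg (le_of_lt hmaxpos) _
  have hG : ‖g (θ + h) + g (θ - h) - 2 * g θ‖
      ≤ 24 * M * (max |θ - t| h) ^ (-(3:ℝ)/2) * h ^ 2 := by
    rcases le_or_gt |θ - t| (2*h) with hcase | hcase
    · -- middle case
      have hgy : ∀ y ∈ Set.Icc (θ - h) (θ + h), ‖g y‖ ≤ 2 * h ^ ((1:ℝ)/2) * M := by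
        intro y hy
        have h1 : |y - t| ≤ 3 * h := by
          have : |y - t| ≤ |θ - t| + h := by
            rw [abs_le]
            constructor <;> [linarith [hy.1, neg_abs_le (θ - t)];
              linarith [hy.2, le_abs_self (θ - t)]]
          linarith
        have h2 : |y - t| ^ ((1:ℝ)/2) ≤ (3*h) ^ ((1:ℝ)/2) :=
          Real.rpow_le_rpow (abs_nonneg _) h1 (by norm_num)
        have h3 : (3*h) ^ ((1:ℝ)/2) = 3 ^ ((1:ℝ)/2) * h ^ ((1:ℝ)/2) :=
          Real.mul_rpow (by norm_num) (le_of_lt hh)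
        have h4 : (3:ℝ) ^ ((1:ℝ)/2) ≤ 2 := by
          rw [← Real.sqrt_eq_rpow]
          nlinarith [Real.sq_sqrt (by norm_num : (0:ℝ) ≤ 3), Real.sqrt_nonneg 3]
        have h5 : |y - t| ^ ((1:ℝ)/2) ≤ 2 * h ^ ((1:ℝ)/2) := by
          have hnn : (0:ℝ) ≤ h ^ ((1:ℝ)/2) := Real.rpow_nonneg (le_of_lt hh) _
          calc |y - t| ^ ((1:ℝ)/2) ≤ 3 ^ ((1:ℝ)/2) * h ^ ((1:ℝ)/2) := by rw [← h3]; exact h2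
          _ ≤ 2 * h ^ ((1:ℝ)/2) := mul_le_mul_of_nonneg_right h4 hnn
        have hby : ‖b y‖ ≤ M := hMb y (hIccball y hy).2
        calc ‖g y‖ = |y - t| ^ ((1:ℝ)/2) * ‖b y‖ := by
              simp only [hg]
              rw [norm_mul, Complex.norm_real, Real.norm_eq_abs,
                abs_of_nonneg (Real.rpow_nonneg (abs_nonneg _) _)]
        _ ≤ (2 * h ^ ((1:ℝ)/2)) * M := by
              apply mul_le_mul h5 hby (norm_nonneg _)
              positivity
        _ = 2 * h ^ ((1:ℝ)/2) * M := by ring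
      have htri : ‖g (θ + h) + g (θ - h) - 2 * g θ‖ ≤ 8 * h ^ ((1:ℝ)/2) * M := by
        have t1 := hgy (θ + h) ⟨by linarith, le_refl _⟩
        have t2 := hgy (θ - h) ⟨le_refl _, by linarith⟩
        have t3 := hgy θ ⟨by linarith, by linarith⟩
        have e1 : ‖g (θ + h) + g (θ - h) - 2 * g θ‖
            ≤ ‖g (θ + h)‖ + ‖g (θ - h)‖ + 2 * ‖g θ‖ := by
          calc ‖g (θ + h) + g (θ - h) - 2 * g θ‖
              ≤ ‖g (θ + h) + g (θ - h)‖ + ‖2 * g θ‖ := norm_sub_le _ _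
          _ ≤ ‖g (θ + h)‖ + ‖g (θ - h)‖ + 2 * ‖g θ‖ := by
              have := norm_add_le (g (θ + h)) (g (θ - h))
              have h2 : ‖(2:ℂ) * g θ‖ = 2 * ‖g θ‖ := by
                rw [norm_mul]; norm_num
              linarith
        linarith
      -- h^(1/2) ≤ 3 * max^(-3/2) * h^2
      have k1 : h ^ ((1:ℝ)/2) = h ^ (-(3:ℝ)/2) * h ^ 2 := by
        rw [← Real.rpow_natCast h 2, ← Real.rpow_add hh]
        norm_num
      have k2 : h ^ (-(3:ℝ)/2) = 2 ^ ((3:ℝ)/2) * (2*h) ^ (-(3:ℝ)/2) := by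
        rw [Real.mul_rpow (by norm_num : (0:ℝ) ≤ 2) (le_of_lt hh), ← mul_assoc,
          ← Real.rpow_add two_pos]
        norm_num
      have k3 : (2*h) ^ (-(3:ℝ)/2) ≤ (max |θ - t| h) ^ (-(3:ℝ)/2) :=
        rpow_anti hmaxpos (max_le hcase (by linarith)) (by norm_num)
      have k4 : h ^ ((1:ℝ)/2) ≤ 3 * ((max |θ - t| h) ^ (-(3:ℝ)/2) * h ^ 2) := by
        rw [k1, k2]
        have hsq : (0:ℝ) ≤ h ^ 2 := sq_nonneg h
        have : 2 ^ ((3:ℝ)/2) * (2*h) ^ (-(3:ℝ)/2) ≤ 3 * (max |θ - t| h) ^ (-(3:ℝ)/2) := by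
          have n2 : (0:ℝ) ≤ 2 ^ ((3:ℝ)/2) := Real.rpow_nonneg (by norm_num) _
          calc 2 ^ ((3:ℝ)/2) * (2*h) ^ (-(3:ℝ)/2)
              ≤ 2 ^ ((3:ℝ)/2) * (max |θ - t| h) ^ (-(3:ℝ)/2) :=
                mul_le_mul_of_nonneg_left k3 n2
          _ ≤ 3 * (max |θ - t| h) ^ (-(3:ℝ)/2) :=
                mul_le_mul_of_nonneg_right num1 hmaxnn
        calc 2 ^ ((3:ℝ)/2) * (2*h) ^ (-(3:ℝ)/2) * h ^ 2
            ≤ 3 * (max |θ - t| h) ^ (-(3:ℝ)/2) * h ^ 2 :=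
              mul_le_mul_of_nonneg_right this hsq
        _ = 3 * ((max |θ - t| h) ^ (-(3:ℝ)/2) * h ^ 2) := by ring
      calc ‖g (θ + h) + g (θ - h) - 2 * g θ‖ ≤ 8 * h ^ ((1:ℝ)/2) * M := htri
      _ ≤ 8 * (3 * ((max |θ - t| h) ^ (-(3:ℝ)/2) * h ^ 2)) * M := by
          apply mul_le_mul_of_nonneg_right _ hM0
          exact mul_le_mul_of_nonneg_left k4 (by norm_num)
      _ = 24 * M * (max |θ - t| h) ^ (-(3:ℝ)/2) * h ^ 2 := by ring
    · -- outer cases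
      have hmaxeq : max |θ - t| h = |θ - t| := max_eq_left (by linarith)
      rcases lt_or_ge t θ with hside | hside
      · -- right side : θ - t = |θ - t| > 2h
        have hxpos : 0 < θ - t := by linarith
        have hxabs : |θ - t| = θ - t := abs_of_pos hxpos
        have h2x : 2*h < θ - t := by rw [hxabs] at hcase; exact hcase
        have hxd : θ - t < δ := by rw [hxabs] at hxδ; exact hxδ
        have := phib_sd_right hδ hδ1 hM0 hb hb' hMb hMb' hMb'' hh h2x hxd hhδ
        have hthe : t + (θ - t) = θ := by ring
        rw [hthe] at this
        rw [hmaxeq, hxabs]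
        simp only [hg]
        calc ‖((|θ + h - t| ^ ((1:ℝ)/2) : ℝ) : ℂ) * b (θ + h)
              + ((|θ - h - t| ^ ((1:ℝ)/2) : ℝ) : ℂ) * b (θ - h)
              - 2 * (((|θ - t| ^ ((1:ℝ)/2) : ℝ) : ℂ) * b θ)‖
            ≤ 5 * M * (θ - t) ^ (-(3:ℝ)/2) * h ^ 2 := this
        _ ≤ 24 * M * (θ - t) ^ (-(3:ℝ)/2) * h ^ 2 := by
            have hnn : (0:ℝ) ≤ M * (θ - t) ^ (-(3:ℝ)/2) * h ^ 2 :=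
              mul_nonneg (mul_nonneg hM0 (Real.rpow_nonneg (le_of_lt hxpos) _)) (sq_nonneg h)
            nlinarith
      · -- left side : reflection
        have hxneg : θ - t < 0 := by
          rcases lt_or_eq_of_le hside with h' | h'
          · linarith
          · exfalso; rw [← h'] at hcase; simp at hcase; linarith
        have hxabs : |θ - t| = -(θ - t) := abs_of_neg hxneg
        have h2x : 2*h < -(θ - t) := by rw [hxabs] at hcase; exact hcase
        have hxd : -(θ - t) < δ := by rw [hxabs] at hxδ; exact hxδ
        -- reflected functions
        set B : ℝ → ℂ := fun y => b (2*t - y) with hB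
        set B' : ℝ → ℂ := fun y => -(b' (2*t - y)) with hB'
        set B'' : ℝ → ℂ := fun y => b'' (2*t - y) with hB''
        have hrefl : ∀ y : ℝ, y ∈ ball t (4*δ) → (2*t - y) ∈ ball t (4*δ) := by
          intro y hy
          rw [mem_ball, Real.dist_eq] at *
          rw [show 2*t - y - t = -(y - t) by ring, abs_neg]
          exact hy
        have hreflc : ∀ y : ℝ, y ∈ closedBall t (2*δ) → (2*t - y) ∈ closedBall t (2*δ) := by
          intro y hy
          rw [mem_closedBall, Real.dist_eq] at *
          rw [show 2*t - y - t = -(y - t) by ring, abs_neg]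
          exact hy
        have hrd : ∀ y : ℝ, HasDerivAt (fun z : ℝ => 2*t - z) (-1) y := by
          intro y
          simpa using ((hasDerivAt_id y).const_sub (2*t))
        have hBd : ∀ y ∈ ball t (4*δ), HasDerivAt B (B' y) y := by
          intro y hy
          have := (hb _ (hrefl y hy)).scomp (𝕜 := ℝ) y (hrd y)
          simpa [hB, hB', Function.comp_def] using this
        have hBd' : ∀ y ∈ ball t (4*δ), HasDerivAt B' (B'' y) y := by
          intro y hy
          have := ((hb' _ (hrefl y hy)).scomp (𝕜 := ℝ) y (hrd y)).neg
          simpa [hB', hB'', Function.comp_def, Pi.neg_def] using this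
        have hMB : ∀ y ∈ closedBall t (2*δ), ‖B y‖ ≤ M := fun y hy => hMb _ (hreflc y hy)
        have hMB' : ∀ y ∈ closedBall t (2*δ), ‖B' y‖ ≤ M := by
          intro y hy
          simp only [hB', norm_neg]
          exact hMb' _ (hreflc y hy)
        have hMB'' : ∀ y ∈ closedBall t (2*δ), ‖B'' y‖ ≤ M := fun y hy => hMb'' _ (hreflc y hy)
        have key := phib_sd_right hδ hδ1 hM0 hBd hBd' hMB hMB' hMB'' hh h2x hxd hhδ
        -- rewrite key into the g-form
        have e1 : t + -(θ - t) + h - t = -(θ - h - t) := by ring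
        have e2 : t + -(θ - t) - h - t = -(θ + h - t) := by ring
        have e3 : t + -(θ - t) - t = -(θ - t) := by ring
        have f1 : B (t + -(θ - t) + h) = b (θ - h) := by
          simp only [hB]; congr 1; ring
        have f2 : B (t + -(θ - t) - h) = b (θ + h) := by
          simp only [hB]; congr 1; ring
        have f3 : B (t + -(θ - t)) = b θ := by
          simp only [hB]; congr 1; ring
        rw [e1, e2, e3, abs_neg, abs_neg, abs_neg, f1, f2, f3] at key
        have hexpr : ((|θ - h - t| ^ ((1:ℝ)/2) : ℝ) : ℂ) * b (θ - h)
            + ((|θ + h - t| ^ ((1:ℝ)/2) : ℝ) : ℂ) * b (θ + h)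
            - 2 * (((|θ - t| ^ ((1:ℝ)/2) : ℝ) : ℂ) * b θ)
            = g (θ + h) + g (θ - h) - 2 * g θ := by
          simp only [hg]; ring
        rw [hexpr] at key
        rw [hmaxeq, hxabs]
        have hnn : (0:ℝ) ≤ M * (-(θ - t)) ^ (-(3:ℝ)/2) * h ^ 2 :=
          mul_nonneg (mul_nonneg hM0 (Real.rpow_nonneg (by linarith) _)) (sq_nonneg h)
        calc ‖g (θ + h) + g (θ - h) - 2 * g θ‖
            ≤ 5 * M * (-(θ - t)) ^ (-(3:ℝ)/2) * h ^ 2 := key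
        _ ≤ 24 * M * (-(θ - t)) ^ (-(3:ℝ)/2) * h ^ 2 := by nlinarith
  calc ‖f (θ + h) + f (θ - h) - 2 * f θ‖
      ≤ ‖a (θ + h) + a (θ - h) - 2 * a θ‖ + ‖g (θ + h) + g (θ - h) - 2 * g θ‖ := by
        rw [hdecomp]; exact norm_add_le _ _
  _ ≤ M * h ^ 2 + 24 * M * (max |θ - t| h) ^ (-(3:ℝ)/2) * h ^ 2 := add_le_add hA hG



theorem myAnalyticAt_deriv {f : ℝ → ℂ} {x : ℝ} (h : AnalyticAt ℝ f x) :
    AnalyticAt ℝ (deriv f) x := by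
  have h2 : AnalyticAt ℝ (fderiv ℝ f) x := h.fderiv
  have h3 : AnalyticAt ℝ (fun y => fderiv ℝ f y 1) x :=
    ((ContinuousLinearMap.apply ℝ ℂ (1:ℝ)).analyticAt (fderiv ℝ f x)).comp h2
  exact h3.congr (Filter.Eventually.of_forall fun y => rfl)

theorem near_package (f : ℝ → ℂ) {t δ : ℝ} (hδ : 0 < δ) (hδ1 : δ ≤ 1)
    (hrepr : ∃ a b : ℝ → ℂ,
      (∀ y ∈ ball t (4*δ), AnalyticAt ℝ a y) ∧
      (∀ y ∈ ball t (4*δ), AnalyticAt ℝ b y) ∧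
      ∀ y ∈ ball t (4*δ), f y = a y + ((|y - t| ^ ((1:ℝ)/2) : ℝ) : ℂ) * b y) :
    ∃ M : ℝ, 0 ≤ M ∧ ∀ h θ : ℝ, 0 < h → h ≤ δ/2 → |θ - t| < δ →
      ‖f (θ + h) + f (θ - h) - 2 * f θ‖
        ≤ M * h ^ 2 + 24 * M * (max |θ - t| h) ^ (-(3:ℝ)/2) * h ^ 2 := by
  obtain ⟨a, b, ha, hb, hr⟩ := hrepr
  have hsub : closedBall t (2*δ) ⊆ ball t (4*δ) := by
    intro y hy
    rw [mem_closedBall] at hy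
    rw [mem_ball]
    linarith
  have hcomp : IsCompact (closedBall t (2*δ)) := isCompact_closedBall t (2*δ)
  have hconta : ContinuousOn (deriv (deriv a)) (closedBall t (2*δ)) := fun y hy =>
    ((myAnalyticAt_deriv (myAnalyticAt_deriv (ha y (hsub hy)))).continuousAt).continuousWithinAt
  have hcontb : ContinuousOn b (closedBall t (2*δ)) := fun y hy =>
    ((hb y (hsub hy)).continuousAt).continuousWithinAt
  have hcontb' : ContinuousOn (deriv b) (closedBall t (2*δ)) := fun y hy =>
    ((myAnalyticAt_deriv (hb y (hsub hy))).continuousAt).continuousWithinAt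
  have hcontb'' : ContinuousOn (deriv (deriv b)) (closedBall t (2*δ)) := fun y hy =>
    ((myAnalyticAt_deriv (myAnalyticAt_deriv (hb y (hsub hy)))).continuousAt).continuousWithinAt
  obtain ⟨Ma, hMa⟩ := hcomp.exists_bound_of_continuousOn hconta
  obtain ⟨Mb, hMb⟩ := hcomp.exists_bound_of_continuousOn hcontb
  obtain ⟨Mb', hMb'⟩ := hcomp.exists_bound_of_continuousOn hcontb'
  obtain ⟨Mb'', hMb''⟩ := hcomp.exists_bound_of_continuousOn hcontb''
  set M : ℝ := max 0 (max (max Ma Mb) (max Mb' Mb'')) with hM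
  have hM0 : 0 ≤ M := le_max_left _ _
  have l1 : Ma ≤ M := le_trans (le_trans (le_max_left _ _) (le_max_left _ _)) (le_max_right _ _)
  have l2 : Mb ≤ M := le_trans (le_trans (le_max_right _ _) (le_max_left _ _)) (le_max_right _ _)
  have l3 : Mb' ≤ M := le_trans (le_trans (le_max_left _ _) (le_max_right _ _)) (le_max_right _ _)
  have l4 : Mb'' ≤ M := le_trans (le_trans (le_max_right _ _) (le_max_right _ _)) (le_max_right _ _)
  refine ⟨M, hM0, ?_⟩
  intro h θ hh hhδ hxδ
  exact key_near hδ hδ1 hM0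
    (fun y hy => (ha y hy).differentiableAt.hasDerivAt)
    (fun y hy => (myAnalyticAt_deriv (ha y hy)).differentiableAt.hasDerivAt)
    (fun y hy => (hb y hy).differentiableAt.hasDerivAt)
    (fun y hy => (myAnalyticAt_deriv (hb y hy)).differentiableAt.hasDerivAt)
    (fun y hy => le_trans (hMa y hy) l1)
    (fun y hy => le_trans (hMb y hy) l2)
    (fun y hy => le_trans (hMb' y hy) l3)
    (fun y hy => le_trans (hMb'' y hy) l4)
    hr hh hhδ hxδ



theorem far_package (f : ℝ → ℂ) (T : Finset ℝ) {δ : ℝ} (hδ : 0 < δ) (hδ1 : δ ≤ 1)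
    (han : ∀ y ∈ Set.Icc (-π) (3*π), (∀ t ∈ T, δ/2 ≤ |y - t|) → AnalyticAt ℝ f y) :
    ∃ M : ℝ, 0 ≤ M ∧ ∀ h θ : ℝ, 0 < h → h ≤ δ/2 → θ ∈ Set.Icc (0:ℝ) (2*π) →
      (∀ t ∈ T, δ ≤ |θ - t|) → ‖f (θ + h) + f (θ - h) - 2 * f θ‖ ≤ M * h ^ 2 := by
  have hπ := Real.pi_gt_three
  set K : Set ℝ := Set.Icc (-π) (3*π) ∩ {y | ∀ t ∈ T, δ/2 ≤ |y - t|} with hK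
  have hKclosed : IsClosed K := by
    apply IsClosed.inter isClosed_Icc
    have : {y : ℝ | ∀ t ∈ T, δ/2 ≤ |y - t|} = ⋂ t ∈ T, {y : ℝ | δ/2 ≤ |y - t|} := by
      ext y; simp
    rw [this]
    exact isClosed_biInter fun t _ =>
      isClosed_le continuous_const ((continuous_id.sub continuous_const).abs)
  have hKcomp : IsCompact K := isCompact_Icc.of_isClosed_subset hKclosed
    Set.inter_subset_left
  have hKan : ∀ y ∈ K, AnalyticAt ℝ f y := fun y hy => han y hy.1 hy.2
  have hKcont : ContinuousOn (deriv (deriv f)) K := fun y hy =>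
    ((myAnalyticAt_deriv (myAnalyticAt_deriv (hKan y hy))).continuousAt).continuousWithinAt
  obtain ⟨M0, hM0⟩ := hKcomp.exists_bound_of_continuousOn hKcont
  refine ⟨max 0 M0, le_max_left _ _, ?_⟩
  intro h θ hh hhδ hθ hfar
  have hIccK : Set.Icc (θ - h) (θ + h) ⊆ K := by
    intro y hy
    constructor
    · constructor
      · have := hθ.1; linarith [hy.1]
      · have := hθ.2; linarith [hy.2]
    · intro t ht
      have h1 := hfar t ht
      have h2 : |y - θ| ≤ h := by
        rw [abs_le]; exact ⟨by linarith [hy.1], by linarith [hy.2]⟩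
      have : |θ - t| - |y - θ| ≤ |y - t| := by
        have := abs_sub_abs_le_abs_sub (θ - t) (θ - y)
        rw [show θ - t - (θ - y) = y - t by ring] at this
        rw [show θ - y = -(y - θ) by ring, abs_neg] at this
        linarith
      linarith
  apply sd_bound (le_of_lt hh)
    (fun y hy => (hKan y (hIccK hy)).differentiableAt.hasDerivAt)
    (fun y hy => (myAnalyticAt_deriv (hKan y (hIccK hy))).differentiableAt.hasDerivAt)
    (fun y hy => le_trans (hM0 y (hIccK hy)) (le_max_right _ _))



set_option maxHeartbeats 2000000 in

theorem global_bound (f : ℝ → ℂ) (hcont : Continuous f) (T : Finset ℝ) {δ C : ℝ}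
    (hδ : 0 < δ) (hδ1 : δ ≤ 1) (hC0 : 0 ≤ C)
    (hTicc : ∀ t ∈ T, t ∈ Set.Icc (-π) (3*π))
    (hnear : ∀ t ∈ T, ∀ h θ : ℝ, 0 < h → h ≤ δ/2 → |θ - t| < δ →
      ‖f (θ + h) + f (θ - h) - 2 * f θ‖
        ≤ C * h ^ 2 + 24 * C * (max |θ - t| h) ^ (-(3:ℝ)/2) * h ^ 2)
    (hfar : ∀ h θ : ℝ, 0 < h → h ≤ δ/2 → θ ∈ Set.Icc (0:ℝ) (2*π) →
      (∀ t ∈ T, δ ≤ |θ - t|) → ‖f (θ + h) + f (θ - h) - 2 * f θ‖ ≤ C * h ^ 2)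
    {h : ℝ} (hh : 0 < h) (hhδ : h ≤ δ/2) :
    ∫ θ in (0:ℝ)..(2*π), ‖f (θ + h) + f (θ - h) - 2 * f θ‖
      ≤ (2*π + 144 * T.card) * C * h ^ ((3:ℝ)/2) := by
  have hπ := Real.pi_gt_three
  have hh1 : h ≤ 1 := by linarith
  set R : ℝ → ℝ := fun θ =>
    C * h ^ 2 + ∑ t ∈ T, 24 * C * (max |θ - t| h) ^ (-(3:ℝ)/2) * h ^ 2 with hR
  have hmaxpos : ∀ (θ t : ℝ), 0 < max |θ - t| h :=
    fun θ t => lt_of_lt_of_le hh (le_max_right _ _)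
  have hterm_nonneg : ∀ (θ : ℝ), ∀ t ∈ T, 0 ≤ 24 * C * (max |θ - t| h) ^ (-(3:ℝ)/2) * h ^ 2 := by
    intro θ t _
    have := Real.rpow_nonneg (le_of_lt (hmaxpos θ t)) (-(3:ℝ)/2)
    positivity
  -- pointwise bound
  have hpt : ∀ θ ∈ Set.Icc (0:ℝ) (2*π), ‖f (θ + h) + f (θ - h) - 2 * f θ‖ ≤ R θ := by
    intro θ hθ
    by_cases hex : ∃ t ∈ T, |θ - t| < δ
    · obtain ⟨t, ht, htδ⟩ := hex
      have hb := hnear t ht h θ hh hhδ htδ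
      have hsingle : 24 * C * (max |θ - t| h) ^ (-(3:ℝ)/2) * h ^ 2
          ≤ ∑ t' ∈ T, 24 * C * (max |θ - t'| h) ^ (-(3:ℝ)/2) * h ^ 2 :=
        Finset.single_le_sum (hterm_nonneg θ) ht
      simp only [hR]
      linarith
    · push_neg at hex
      have hb := hfar h θ hh hhδ hθ hex
      have hsum : 0 ≤ ∑ t' ∈ T, 24 * C * (max |θ - t'| h) ^ (-(3:ℝ)/2) * h ^ 2 :=
        Finset.sum_nonneg (hterm_nonneg θ)
      simp only [hR]
      linarith
  -- integrability
  have hcontΔ : Continuous fun θ => ‖f (θ + h) + f (θ - h) - 2 * f θ‖ := by fun_prop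
  have hcontterm : ∀ t ∈ T, Continuous fun θ : ℝ => 24 * C * (max |θ - t| h) ^ (-(3:ℝ)/2) * h ^ 2 := by
    intro t _
    apply Continuous.mul _ continuous_const
    apply Continuous.mul continuous_const
    apply Continuous.rpow_const
    · exact (continuous_abs.comp (continuous_id.sub continuous_const)).max continuous_const
    · intro x; exact Or.inl (ne_of_gt (hmaxpos x t))
  have hcontR : Continuous R := by
    apply Continuous.add continuous_const
    exact continuous_finset_sum T hcontterm
  have step1 : ∫ θ in (0:ℝ)..(2*π), ‖f (θ + h) + f (θ - h) - 2 * f θ‖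
      ≤ ∫ θ in (0:ℝ)..(2*π), R θ :=
    intervalIntegral.integral_mono_on (by positivity)
      (hcontΔ.intervalIntegrable _ _) (hcontR.intervalIntegrable _ _) hpt
  have step2 : ∫ θ in (0:ℝ)..(2*π), R θ
      = C * h ^ 2 * (2*π)
        + ∑ t ∈ T, ∫ θ in (0:ℝ)..(2*π), 24 * C * (max |θ - t| h) ^ (-(3:ℝ)/2) * h ^ 2 := by
    simp only [hR]
    rw [intervalIntegral.integral_add ((continuous_const).intervalIntegrable _ _)
      ((continuous_finset_sum T hcontterm).intervalIntegrable _ _)]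
    rw [intervalIntegral.integral_const, intervalIntegral.integral_finset_sum
      (fun t ht => ((hcontterm t ht).intervalIntegrable _ _))]
    simp [smul_eq_mul]
    ring
  have hint_t : ∀ t ∈ T, ∫ θ in (0:ℝ)..(2*π), 24 * C * (max |θ - t| h) ^ (-(3:ℝ)/2) * h ^ 2
      ≤ 144 * C * h ^ ((3:ℝ)/2) := by
    intro t ht
    have e1 : ∀ θ : ℝ, 24 * C * (max |θ - t| h) ^ (-(3:ℝ)/2) * h ^ 2
        = (24 * C * h ^ 2) * (max |θ - t| h) ^ (-(3:ℝ)/2) := fun θ => by ring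
    simp_rw [e1]
    rw [intervalIntegral.integral_const_mul]
    have hker := kernel_integral_bound hh hh1 (hTicc t ht)
    have hcoef : (0:ℝ) ≤ 24 * C * h ^ 2 := by positivity
    calc (24 * C * h ^ 2) * ∫ θ in (0:ℝ)..(2*π), (max |θ - t| h) ^ (-(3:ℝ)/2)
        ≤ (24 * C * h ^ 2) * (6 * h ^ (-(1:ℝ)/2)) := mul_le_mul_of_nonneg_left hker hcoef
    _ = 144 * C * (h ^ 2 * h ^ (-(1:ℝ)/2)) := by ring
    _ = 144 * C * h ^ ((3:ℝ)/2) := by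
        congr 1
        rw [← Real.rpow_natCast h 2, ← Real.rpow_add hh]
        norm_num
  have hsum_le : ∑ t ∈ T, ∫ θ in (0:ℝ)..(2*π), 24 * C * (max |θ - t| h) ^ (-(3:ℝ)/2) * h ^ 2
      ≤ T.card * (144 * C * h ^ ((3:ℝ)/2)) := by
    calc ∑ t ∈ T, ∫ θ in (0:ℝ)..(2*π), 24 * C * (max |θ - t| h) ^ (-(3:ℝ)/2) * h ^ 2
        ≤ ∑ _t ∈ T, 144 * C * h ^ ((3:ℝ)/2) := Finset.sum_le_sum hint_t
    _ = T.card * (144 * C * h ^ ((3:ℝ)/2)) := by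
        rw [Finset.sum_const, nsmul_eq_mul]
  have hsq : h ^ 2 ≤ h ^ ((3:ℝ)/2) := by
    rw [← Real.rpow_natCast h 2]
    exact Real.rpow_le_rpow_of_exponent_ge hh hh1 (by norm_num)
  have hfinal : C * h ^ 2 * (2*π) ≤ 2*π * C * h ^ ((3:ℝ)/2) := by
    have := mul_le_mul_of_nonneg_left hsq hC0
    nlinarith [Real.pi_pos]
  calc ∫ θ in (0:ℝ)..(2*π), ‖f (θ + h) + f (θ - h) - 2 * f θ‖ ≤ ∫ θ in (0:ℝ)..(2*π), R θ := step1
  _ = C * h ^ 2 * (2*π)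
      + ∑ t ∈ T, ∫ θ in (0:ℝ)..(2*π), 24 * C * (max |θ - t| h) ^ (-(3:ℝ)/2) * h ^ 2 := step2
  _ ≤ 2*π * C * h ^ ((3:ℝ)/2) + T.card * (144 * C * h ^ ((3:ℝ)/2)) := add_le_add hfinal hsum_le
  _ = (2*π + 144 * T.card) * C * h ^ ((3:ℝ)/2) := by ring



set_option maxHeartbeats 1000000 in

theorem shift_identity (f : ℝ → ℂ) (hcont : Continuous f)
    (hper : Function.Periodic f (2*π)) (k : ℤ) (h : ℝ)
    (hplus : Complex.exp (Complex.I * k * h) = -1)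
    (hminus : Complex.exp (-(Complex.I * k * h)) = -1) :
    ‖∫ θ in (0:ℝ)..(2*π), f θ * Complex.exp (-Complex.I * k * θ)‖
      ≤ (1/4) * ∫ θ in (0:ℝ)..(2*π), ‖f (θ + h) + f (θ - h) - 2 * f θ‖ := by
  set e : ℝ → ℂ := fun θ => Complex.exp (-Complex.I * k * θ) with he
  have hecont : Continuous e := by
    apply Complex.continuous_exp.comp
    fun_prop
  set F : ℝ → ℂ := fun θ => f θ * e θ with hF
  have hFcont : Continuous F := hcont.mul hecont
  have hFper : Function.Periodic F (2*π) := by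
    intro θ
    simp only [hF, he]
    rw [hper θ]
    congr 1
    have : -Complex.I * k * ((θ:ℝ) + 2*π : ℝ) = -Complex.I * k * (θ:ℝ) + (-k) * (2*π*Complex.I) := by
      push_cast
      ring
    rw [this, Complex.exp_add]
    have : Complex.exp ((-k : ℤ) * (2*(π:ℂ)*Complex.I)) = 1 := Complex.exp_int_mul_two_pi_mul_I (-k)
    push_cast at this
    rw [this, mul_one]
  set I0 : ℂ := ∫ θ in (0:ℝ)..(2*π), F θ with hI0
  -- shifted integrals
  have keyshift : ∀ s : ℝ, (∫ θ in (0:ℝ)..(2*π), F (θ + s)) = I0 := by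
    intro s
    rw [intervalIntegral.integral_comp_add_right F s]
    have h2 := hFper.intervalIntegral_add_eq s 0
    rw [zero_add] at h2
    rw [show (0:ℝ) + s = s by ring, show 2*π + s = s + 2*π by ring, h2]
  have hplusint : (∫ θ in (0:ℝ)..(2*π), f (θ + h) * e θ) = -I0 := by
    have hint : ∀ θ : ℝ, f (θ + h) * e θ = F (θ + h) * Complex.exp (Complex.I * k * h) := by
      intro θ
      have expeq : Complex.exp (-Complex.I * k * (((θ + h) : ℝ) : ℂ))
          * Complex.exp (Complex.I * k * h) = Complex.exp (-Complex.I * k * (θ:ℝ)) := by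
        rw [← Complex.exp_add]
        congr 1
        push_cast
        ring
      simp only [hF, he]
      rw [← expeq]
      ring
    simp_rw [hint]
    rw [intervalIntegral.integral_mul_const, keyshift h, hplus]
    ring
  have hminusint : (∫ θ in (0:ℝ)..(2*π), f (θ - h) * e θ) = -I0 := by
    have hint : ∀ θ : ℝ, f (θ - h) * e θ = F (θ + (-h)) * Complex.exp (-(Complex.I * k * h)) := by
      intro θ
      have expeq : Complex.exp (-Complex.I * k * (((θ + (-h)) : ℝ) : ℂ))
          * Complex.exp (-(Complex.I * k * h)) = Complex.exp (-Complex.I * k * (θ:ℝ)) := by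
        rw [← Complex.exp_add]
        congr 1
        push_cast
        ring
      simp only [hF, he]
      rw [show θ - h = θ + (-h) by ring, ← expeq]
      ring
    simp_rw [hint]
    rw [intervalIntegral.integral_mul_const, keyshift (-h), hminus]
    ring
  -- integrability
  have int1 : IntervalIntegrable (fun θ => f (θ + h) * e θ) MeasureTheory.volume 0 (2*π) :=
    ((hcont.comp (by fun_prop : Continuous fun θ : ℝ => θ + h)).mul hecont).intervalIntegrable _ _
  have int2 : IntervalIntegrable (fun θ => f (θ - h) * e θ) MeasureTheory.volume 0 (2*π) :=
    ((hcont.comp (by fun_prop : Continuous fun θ : ℝ => θ - h)).mul hecont).intervalIntegrable _ _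
  have int3 : IntervalIntegrable (fun θ => (2:ℂ) * (f θ * e θ)) MeasureTheory.volume 0 (2*π) :=
    ((by fun_prop : Continuous fun θ : ℝ => (2:ℂ) * (f θ * e θ))).intervalIntegrable _ _
  have combined : (∫ θ in (0:ℝ)..(2*π), (f (θ + h) + f (θ - h) - 2 * f θ) * e θ) = -(4:ℂ) * I0 := by
    have : ∀ θ : ℝ, (f (θ + h) + f (θ - h) - 2 * f θ) * e θ
        = f (θ + h) * e θ + f (θ - h) * e θ - (2:ℂ) * (f θ * e θ) := by
      intro θ; ring
    simp_rw [this]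
    rw [intervalIntegral.integral_sub (int1.add int2) int3,
      intervalIntegral.integral_add int1 int2,
      intervalIntegral.integral_const_mul, hplusint, hminusint]
    simp only [hI0, hF]
    ring
  have hIeq : I0 = (-(1:ℂ)/4) * ∫ θ in (0:ℝ)..(2*π), (f (θ + h) + f (θ - h) - 2 * f θ) * e θ := by
    rw [combined]; ring
  have hnorm1 : ∀ θ : ℝ, ‖(f (θ + h) + f (θ - h) - 2 * f θ) * e θ‖
      = ‖f (θ + h) + f (θ - h) - 2 * f θ‖ := by
    intro θ
    rw [norm_mul]
    have : e θ = Complex.exp (((-(k:ℝ) * θ : ℝ) : ℂ) * Complex.I) := by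
      simp only [he]
      congr 1
      push_cast
      ring
    rw [this]
    rw [Complex.norm_exp_ofReal_mul_I, mul_one]
  calc ‖I0‖ = (1/4) * ‖∫ θ in (0:ℝ)..(2*π), (f (θ + h) + f (θ - h) - 2 * f θ) * e θ‖ := by
        rw [hIeq, norm_mul]
        norm_num
  _ ≤ (1/4) * ∫ θ in (0:ℝ)..(2*π), ‖(f (θ + h) + f (θ - h) - 2 * f θ) * e θ‖ := by
        have := intervalIntegral.norm_integral_le_integral_norm
          (f := fun θ => (f (θ + h) + f (θ - h) - 2 * f θ) * e θ)
          (μ := MeasureTheory.volume) (a := 0) (b := 2*π) (by positivity)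
        linarith
  _ = (1/4) * ∫ θ in (0:ℝ)..(2*π), ‖f (θ + h) + f (θ - h) - 2 * f θ‖ := by
        congr 1
        apply intervalIntegral.integral_congr
        intro θ _
        exact hnorm1 θ



theorem T_exists (S : Finset ℝ) :
    ∃ T : Finset ℝ,
      (∀ s ∈ S, ∀ n : ℤ, s + 2*π*n ∈ Set.Icc (-π) (3*π) → s + 2*π*n ∈ T) ∧
      (∀ t ∈ T, t ∈ Set.Icc (-π) (3*π) ∧ ∃ s ∈ S, ∃ n : ℤ, t = s + 2*π*n) := by
  classical
  have h2π : (0:ℝ) < 2*π := by positivity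
  refine ⟨S.biUnion fun s => (Finset.Icc ⌈(-π - s)/(2*π)⌉ ⌊(3*π - s)/(2*π)⌋).image
    fun n : ℤ => s + 2*π*n, ?_, ?_⟩
  · intro s hs n hn
    rw [Set.mem_Icc] at hn
    apply Finset.mem_biUnion.2
    refine ⟨s, hs, Finset.mem_image.2 ⟨n, ?_, rfl⟩⟩
    rw [Finset.mem_Icc]
    constructor
    · apply Int.ceil_le.2
      rw [div_le_iff₀ h2π]
      linarith [hn.1]
    · apply Int.le_floor.2
      rw [le_div_iff₀ h2π]
      linarith [hn.2]
  · intro t ht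
    obtain ⟨s, hs, hmem⟩ := Finset.mem_biUnion.1 ht
    obtain ⟨n, hn, rfl⟩ := Finset.mem_image.1 hmem
    rw [Finset.mem_Icc] at hn
    have h1 : (-π - s)/(2*π) ≤ (n:ℝ) := le_trans (Int.ceil_le.1 (le_refl _) |>.trans (by exact_mod_cast Int.cast_le.2 hn.1)) (le_refl _)
    have h2 : (n:ℝ) ≤ (3*π - s)/(2*π) := le_trans (by exact_mod_cast Int.cast_le.2 hn.2) (Int.floor_le _)
    rw [div_le_iff₀ h2π] at h1
    rw [le_div_iff₀ h2π] at h2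
    exact ⟨⟨by linarith, by linarith⟩, s, hs, n, rfl⟩



theorem repr_transfer (f : ℝ → ℂ)
    (hper : ∀ θ : ℝ, f (θ + 2 * π) = f θ)
    (S : Finset ℝ)
    (hS : ∀ s ∈ S, ∃ ε > 0, ∃ a b : ℝ → ℂ,
      (∀ θ ∈ ball s ε, AnalyticAt ℝ a θ) ∧
      (∀ θ ∈ ball s ε, AnalyticAt ℝ b θ) ∧
      ∀ θ ∈ ball s ε, f θ = a θ + (|θ - s| ^ ((1:ℝ)/2) : ℝ) * b θ)
    (t : ℝ) (s : ℝ) (hs : s ∈ S) (n : ℤ) (hts : t = s + 2*π*n) :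
    ∃ ε > 0, ∃ a b : ℝ → ℂ,
      (∀ y ∈ ball t ε, AnalyticAt ℝ a y) ∧
      (∀ y ∈ ball t ε, AnalyticAt ℝ b y) ∧
      ∀ y ∈ ball t ε, f y = a y + ((|y - t| ^ ((1:ℝ)/2) : ℝ) : ℂ) * b y := by
  obtain ⟨ε, hε, a, b, ha, hb, hrepr⟩ := hS s hs
  have hperiod : Function.Periodic f (2*π) := hper
  have hppn := hperiod.int_mul n
  have hmem : ∀ y : ℝ, y ∈ ball t ε → y - 2*π*n ∈ ball s ε := by
    intro y hy
    rw [mem_ball, Real.dist_eq] at *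
    rw [show y - 2*π*n - s = y - t by rw [hts]; ring]
    exact hy
  have hshift : AnalyticAt ℝ (fun z : ℝ => z - 2*π*(n:ℝ)) =
      fun y => AnalyticAt ℝ (fun z : ℝ => z - 2*π*(n:ℝ)) y := rfl
  refine ⟨ε, hε, fun y => a (y - 2*π*n), fun y => b (y - 2*π*n), ?_, ?_, ?_⟩
  · intro y hy
    have hsub : AnalyticAt ℝ (fun z : ℝ => z - 2*π*(n:ℝ)) y :=
      analyticAt_id.sub analyticAt_const
    have := AnalyticAt.comp (g := a) (f := fun z : ℝ => z - 2*π*(n:ℝ)) (x := y) (ha _ (hmem y hy)) hsub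
    exact this
  · intro y hy
    have hsub : AnalyticAt ℝ (fun z : ℝ => z - 2*π*(n:ℝ)) y :=
      analyticAt_id.sub analyticAt_const
    have := AnalyticAt.comp (g := b) (f := fun z : ℝ => z - 2*π*(n:ℝ)) (x := y) (hb _ (hmem y hy)) hsub
    exact this
  · intro y hy
    have h1 : f y = f (y - 2*π*n) := by
      have := hppn (y - 2*π*n)
      rw [show y - 2*π*(n:ℝ) + (n:ℝ) * (2*π) = y by ring] at this
      exact this
    rw [h1, hrepr _ (hmem y hy)]
    congr 2
    rw [show y - 2*π*(n:ℝ) - s = y - t by rw [hts]; ring]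



lemma norm_exp_unit (k : ℤ) (θ : ℝ) : ‖Complex.exp (-Complex.I * k * θ)‖ = 1 := by
  have : -Complex.I * k * θ = ((-(k:ℝ) * θ : ℝ) : ℂ) * Complex.I := by push_cast; ring
  rw [this, Complex.norm_exp_ofReal_mul_I]

set_option maxHeartbeats 2000000 in

theorem stmt_19 (f : ℝ → ℂ) (hcont : Continuous f)
    (hper : ∀ θ : ℝ, f (θ + 2 * π) = f θ)
    (S : Finset ℝ)
    (hA : ∀ θ : ℝ, (¬ ∃ s ∈ S, ∃ n : ℤ, θ = s + 2 * π * n) → AnalyticAt ℝ f θ)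
    (hS : ∀ s ∈ S, ∃ ε > 0, ∃ a b : ℝ → ℂ,
      (∀ θ ∈ ball s ε, AnalyticAt ℝ a θ) ∧
      (∀ θ ∈ ball s ε, AnalyticAt ℝ b θ) ∧
      ∀ θ ∈ ball s ε, f θ = a θ + (|θ - s| ^ ((1:ℝ)/2) : ℝ) * b θ) :
    ∃ C : ℝ, ∀ k : ℤ, k ≠ 0 →
      ‖(1 / (2 * π) : ℂ) *
          ∫ θ in (0:ℝ)..(2 * π), f θ * Complex.exp (-Complex.I * k * θ)‖ ≤
        C * |(k : ℝ)| ^ (-(3/2) : ℝ) := by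
  classical
  have hπ := Real.pi_gt_three
  have hπ0 := Real.pi_pos
  obtain ⟨T, hT1, hT2⟩ := T_exists S
  -- uniform radius δ
  obtain ⟨δ, hδ0, hδ1, hTδ⟩ := unif_min T
    (fun t δ' => ∃ a b : ℝ → ℂ,
      (∀ y ∈ ball t (4*δ'), AnalyticAt ℝ a y) ∧
      (∀ y ∈ ball t (4*δ'), AnalyticAt ℝ b y) ∧
      ∀ y ∈ ball t (4*δ'), f y = a y + ((|y - t| ^ ((1:ℝ)/2) : ℝ) : ℂ) * b y)
    (by
      intro t ht ε ε' hε' hle ⟨a, b, h1, h2, h3⟩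
      have hball : ball t (4*ε') ⊆ ball t (4*ε) := ball_subset_ball (by linarith)
      exact ⟨a, b, fun y hy => h1 y (hball hy), fun y hy => h2 y (hball hy),
        fun y hy => h3 y (hball hy)⟩)
    (by
      intro t ht
      obtain ⟨_, s, hs, n, hts⟩ := hT2 t ht
      obtain ⟨ε, hε, a, b, h1, h2, h3⟩ := repr_transfer f hper S hS t s hs n hts
      refine ⟨ε/4, by positivity, a, b, ?_, ?_, ?_⟩ <;>
        rw [show 4*(ε/4) = ε by ring] <;> assumption)
  -- uniform near constant
  obtain ⟨MT, hMT0, hMTnear⟩ := unif_max T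
    (fun t M => 0 ≤ M ∧ ∀ h θ : ℝ, 0 < h → h ≤ δ/2 → |θ - t| < δ →
      ‖f (θ + h) + f (θ - h) - 2 * f θ‖
        ≤ M * h ^ 2 + 24 * M * (max |θ - t| h) ^ (-(3:ℝ)/2) * h ^ 2)
    (by
      intro t ht M M' hle ⟨hM0, hbound⟩
      refine ⟨le_trans hM0 hle, ?_⟩
      intro h θ hh hhδ hθδ
      refine le_trans (hbound h θ hh hhδ hθδ) ?_
      have hXnn : (0:ℝ) ≤ (max |θ - t| h) ^ (-(3:ℝ)/2) :=
        Real.rpow_nonneg (le_trans (le_of_lt hh) (le_max_right _ _)) _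
      have hsq := sq_nonneg h
      have t1 : 0 ≤ (M' - M) * h ^ 2 := mul_nonneg (by linarith) hsq
      have t2 : 0 ≤ ((M' - M) * (max |θ - t| h) ^ (-(3:ℝ)/2)) * h ^ 2 :=
        mul_nonneg (mul_nonneg (by linarith) hXnn) hsq
      nlinarith [t1, t2])
    (by
      intro t ht
      obtain ⟨M, hM0, hMb⟩ := near_package f hδ0 hδ1 (hTδ t ht)
      exact ⟨M, hM0, hMb⟩)
  -- far constant
  obtain ⟨MF, hMF0, hMFfar⟩ := far_package f T hδ0 hδ1
    (by
      intro y hy hfar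
      apply hA
      rintro ⟨s, hs, n, rfl⟩
      have hyT : s + 2*π*n ∈ T := hT1 s hs n hy
      have := hfar _ hyT
      simp at this
      linarith)
  -- combined constant
  set C0 : ℝ := MT + MF with hC0def
  have hC00 : 0 ≤ C0 := by positivity
  have hnear' : ∀ t ∈ T, ∀ h θ : ℝ, 0 < h → h ≤ δ/2 → |θ - t| < δ →
      ‖f (θ + h) + f (θ - h) - 2 * f θ‖
        ≤ C0 * h ^ 2 + 24 * C0 * (max |θ - t| h) ^ (-(3:ℝ)/2) * h ^ 2 := by
    intro t ht h θ hh hhδ hθδ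
    refine le_trans ((hMTnear t ht).2 h θ hh hhδ hθδ) ?_
    have hXnn : (0:ℝ) ≤ (max |θ - t| h) ^ (-(3:ℝ)/2) :=
      Real.rpow_nonneg (le_trans (le_of_lt hh) (le_max_right _ _)) _
    have hsq := sq_nonneg h
    have hMTC : MT ≤ C0 := by simp only [hC0def]; linarith
    have t1 : 0 ≤ (C0 - MT) * h ^ 2 := mul_nonneg (by linarith) hsq
    have t2 : 0 ≤ ((C0 - MT) * (max |θ - t| h) ^ (-(3:ℝ)/2)) * h ^ 2 :=
      mul_nonneg (mul_nonneg (by linarith) hXnn) hsq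
    nlinarith [t1, t2]
  have hfar' : ∀ h θ : ℝ, 0 < h → h ≤ δ/2 → θ ∈ Set.Icc (0:ℝ) (2*π) →
      (∀ t ∈ T, δ ≤ |θ - t|) → ‖f (θ + h) + f (θ - h) - 2 * f θ‖ ≤ C0 * h ^ 2 := by
    intro h θ hh hhδ hθ hft
    refine le_trans (hMFfar h θ hh hhδ hθ hft) ?_
    have hsq := sq_nonneg h
    have : MF ≤ C0 := by simp only [hC0def]; linarith
    nlinarith
  set D : ℝ := (2*π + 144 * T.card) * C0 with hDdef
  have hD0 : 0 ≤ D := by positivity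
  -- sup norm of f
  obtain ⟨Mf0, hMf0⟩ := (isCompact_Icc (a := (0:ℝ)) (b := 2*π)).exists_bound_of_continuousOn
    hcont.continuousOn
  set Mf : ℝ := max 0 Mf0 with hMfdef
  have hMf : ∀ θ ∈ Set.Icc (0:ℝ) (2*π), ‖f θ‖ ≤ Mf :=
    fun θ hθ => le_trans (hMf0 θ hθ) (le_max_right _ _)
  have hMfnn : 0 ≤ Mf := le_max_left _ _
  set K0 : ℝ := 2*π/δ with hK0def
  have hK0pos : 0 < K0 := by positivity
  -- the constant
  refine ⟨(1/(8*π)) * D * π ^ ((3:ℝ)/2) + Mf * K0 ^ ((3:ℝ)/2), ?_⟩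
  intro k hk
  set κ : ℝ := |(k:ℝ)| with hκdef
  have hκ1 : 1 ≤ κ := by
    simp only [hκdef]
    rw [← Int.cast_abs]
    exact_mod_cast Int.one_le_abs hk
  have hκ0 : 0 < κ := lt_of_lt_of_le one_pos hκ1
  set h : ℝ := π / κ with hhdef
  have hh0 : 0 < h := by positivity
  -- exp values
  have hkreal : ((k:ℝ)) ≠ 0 := Int.cast_ne_zero.2 hk
  have hreal : (k:ℝ) * h = π ∨ (k:ℝ) * h = -π := by
    rcases lt_or_gt_of_ne (fun heq : k = 0 => hk heq) with hneg | hpos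
    · right
      have hκeq : κ = -(k:ℝ) := by
        simp only [hκdef]
        rw [abs_of_neg]
        exact_mod_cast hneg
      simp only [hhdef, hκeq]
      field_simp
    · left
      have hκeq : κ = (k:ℝ) := by
        simp only [hκdef]
        rw [abs_of_pos]
        exact_mod_cast hpos
      simp only [hhdef, hκeq]
      field_simp
  have hkh : (k:ℂ) * (h:ℂ) = π ∨ (k:ℂ) * (h:ℂ) = -π := by
    have hcast : (k:ℂ) * (h:ℂ) = (((k:ℝ) * h : ℝ) : ℂ) := by push_cast; ring
    rcases hreal with hr | hr
    · left; rw [hcast, hr]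
    · right; rw [hcast, hr]; push_cast; ring
  have hplus : Complex.exp (Complex.I * k * h) = -1 := by
    rcases hkh with hc | hc
    · rw [show Complex.I * k * h = (k:ℂ) * (h:ℂ) * Complex.I by ring, hc]
      exact Complex.exp_pi_mul_I
    · rw [show Complex.I * k * h = (k:ℂ) * (h:ℂ) * Complex.I by ring, hc]
      rw [show (-π : ℂ) * Complex.I = -(π * Complex.I) by ring, Complex.exp_neg,
        Complex.exp_pi_mul_I]
      norm_num
  have hminus : Complex.exp (-(Complex.I * k * h)) = -1 := by
    rw [Complex.exp_neg, hplus]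
    norm_num
  have hshift := shift_identity f hcont hper k h hplus hminus
  have hκnn : (0:ℝ) ≤ κ ^ (-(3:ℝ)/2) := Real.rpow_nonneg (le_of_lt hκ0) _
  have hgoalexp : (-(3/2) : ℝ) = -(3:ℝ)/2 := by norm_num
  have hnormcoef : ‖(1 / (2 * π) : ℂ)‖ = 1/(2*π) := by
    rw [show (1 / (2 * π) : ℂ) = ((1/(2*π) : ℝ) : ℂ) by push_cast; ring]
    rw [Complex.norm_real, Real.norm_eq_abs, abs_of_pos (by positivity)]
  rw [norm_mul, hnormcoef, hgoalexp]
  rcases le_or_gt h (δ/2) with hcase | hcase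
  · -- main case
    have hglobal := global_bound f hcont T hδ0 hδ1 hC00
      (fun t ht => (hT2 t ht).1) hnear' hfar' hh0 hcase
    have hnorm : ‖∫ θ in (0:ℝ)..(2*π), f θ * Complex.exp (-Complex.I * k * θ)‖
        ≤ (1/4) * (D * h ^ ((3:ℝ)/2)) := by
      refine le_trans hshift ?_
      have : (0:ℝ) ≤ 1/4 := by norm_num
      rw [hDdef]
      nlinarith [hglobal]
    have hpow : h ^ ((3:ℝ)/2) = π ^ ((3:ℝ)/2) * κ ^ (-(3:ℝ)/2) := by
      simp only [hhdef]
      rw [Real.div_rpow (le_of_lt hπ0) (le_of_lt hκ0)]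
      rw [show (-(3:ℝ)/2) = -((3:ℝ)/2) by norm_num, Real.rpow_neg (le_of_lt hκ0)]
      ring
    calc (1/(2*π)) * ‖∫ θ in (0:ℝ)..(2*π), f θ * Complex.exp (-Complex.I * k * θ)‖
        ≤ (1/(2*π)) * ((1/4) * (D * h ^ ((3:ℝ)/2))) := by
          apply mul_le_mul_of_nonneg_left hnorm (by positivity)
    _ = (1/(8*π)) * D * π ^ ((3:ℝ)/2) * κ ^ (-(3:ℝ)/2) := by
          rw [hpow]; field_simp; ring
    _ ≤ ((1/(8*π)) * D * π ^ ((3:ℝ)/2) + Mf * K0 ^ ((3:ℝ)/2)) * κ ^ (-(3:ℝ)/2) := by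
          have hterm : 0 ≤ Mf * K0 ^ ((3:ℝ)/2) :=
            mul_nonneg hMfnn (Real.rpow_nonneg (le_of_lt hK0pos) _)
          nlinarith
  · -- small |k| case
    have hκK0 : κ ≤ K0 := by
      simp only [hK0def]
      rw [hhdef, lt_div_iff₀ hκ0] at hcase
      rw [le_div_iff₀ hδ0]
      nlinarith
    have htriv : ‖∫ θ in (0:ℝ)..(2*π), f θ * Complex.exp (-Complex.I * k * θ)‖
        ≤ 2*π * Mf := by
      have h1 : ‖∫ θ in (0:ℝ)..(2*π), f θ * Complex.exp (-Complex.I * k * θ)‖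
          ≤ ∫ θ in (0:ℝ)..(2*π), ‖f θ * Complex.exp (-Complex.I * k * θ)‖ :=
        intervalIntegral.norm_integral_le_integral_norm (by positivity)
      have h2 : ∀ θ ∈ Set.Icc (0:ℝ) (2*π), ‖f θ * Complex.exp (-Complex.I * k * θ)‖ ≤ Mf := by
        intro θ hθ
        rw [norm_mul, norm_exp_unit k θ, mul_one]
        exact hMf θ hθ
      have h3 : ∫ θ in (0:ℝ)..(2*π), ‖f θ * Complex.exp (-Complex.I * k * θ)‖
          ≤ ∫ _θ in (0:ℝ)..(2*π), Mf := by
        apply intervalIntegral.integral_mono_on (by positivity)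
        · exact (Continuous.intervalIntegrable (by fun_prop) _ _)
        · exact intervalIntegrable_const
        · exact h2
      rw [intervalIntegral.integral_const, smul_eq_mul] at h3
      calc ‖∫ θ in (0:ℝ)..(2*π), f θ * Complex.exp (-Complex.I * k * θ)‖
          ≤ ∫ θ in (0:ℝ)..(2*π), ‖f θ * Complex.exp (-Complex.I * k * θ)‖ := h1
      _ ≤ (2*π - 0) * Mf := h3
      _ = 2*π * Mf := by ring
    have hMfbound : Mf ≤ Mf * K0 ^ ((3:ℝ)/2) * κ ^ (-(3:ℝ)/2) := by
      have hκpow : κ ^ ((3:ℝ)/2) ≤ K0 ^ ((3:ℝ)/2) :=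
        Real.rpow_le_rpow (le_of_lt hκ0) hκK0 (by norm_num)
      have hκpowpos : 0 < κ ^ ((3:ℝ)/2) := Real.rpow_pos_of_pos hκ0 _
      have hκpow1 : 1 ≤ κ ^ ((3:ℝ)/2) := by
        calc (1:ℝ) = 1 ^ ((3:ℝ)/2) := (Real.one_rpow _).symm
        _ ≤ κ ^ ((3:ℝ)/2) := Real.rpow_le_rpow (by norm_num) hκ1 (by norm_num)
      have hκinv : κ ^ (-(3:ℝ)/2) = (κ ^ ((3:ℝ)/2))⁻¹ := by
        rw [show (-(3:ℝ)/2) = -((3:ℝ)/2) by norm_num, Real.rpow_neg (le_of_lt hκ0)]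
      have hfrac : 1 ≤ K0 ^ ((3:ℝ)/2) * (κ ^ ((3:ℝ)/2))⁻¹ := by
        rw [← div_eq_mul_inv]
        exact (one_le_div hκpowpos).2 hκpow
      rw [hκinv]
      calc Mf = Mf * 1 := (mul_one Mf).symm
      _ ≤ Mf * (K0 ^ ((3:ℝ)/2) * (κ ^ ((3:ℝ)/2))⁻¹) := mul_le_mul_of_nonneg_left hfrac hMfnn
      _ = Mf * K0 ^ ((3:ℝ)/2) * (κ ^ ((3:ℝ)/2))⁻¹ := by ring
    calc (1/(2*π)) * ‖∫ θ in (0:ℝ)..(2*π), f θ * Complex.exp (-Complex.I * k * θ)‖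
        ≤ (1/(2*π)) * (2*π * Mf) := mul_le_mul_of_nonneg_left htriv (by positivity)
    _ = Mf := by field_simp
    _ ≤ Mf * K0 ^ ((3:ℝ)/2) * κ ^ (-(3:ℝ)/2) := hMfbound
    _ ≤ ((1/(8*π)) * D * π ^ ((3:ℝ)/2) + Mf * K0 ^ ((3:ℝ)/2)) * κ ^ (-(3:ℝ)/2) := by
        have t2 : 0 ≤ (1/(8*π)) * D * π ^ ((3:ℝ)/2) := by
          apply mul_nonneg (mul_nonneg (by positivity) hD0) (Real.rpow_nonneg (le_of_lt hπ0) _)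
        nlinarith
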